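/- Let 0 < C1 ≤ C2, θ ∈ (0,1) and η > 0 be real constants. Let ω, g, H : [0,∞) → ℝ be nonnegative functions, and let F : [0,∞) → ℝ be continuous on [0,∞) and differentiable on (0,∞), satisfying C1·H(t) − g(t) ≤ F(t) ≤ C2·H(t) + g(t) for all t ≥ 0 and the differential inequality F′(t) + η·F(t) ≤ ω(t)·H(t)^θ + g(t) for all t > 0. Then there exists a constant C > 0, depending only on C1, C2 and θ, with the following property: for every t ≥ 0 and every M ≥ 0 such that F(0) ≤ M and (ω(s)/η)^{1/(1−θ)} + g(s)·(1 + 1/η) ≤ M for all s ∈ [0,t], one has F(t) ≤ C·M. -/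

import Mathlib

/-- Generalized Grönwall inequality with relaxation: bound on `F`. -/
theorem gronwall_relaxation_F_bound
    (C1 C2 θ : ℝ) (hC1 : 0 < C1) (hC12 : C1 ≤ C2) (hθ : θ ∈ Set.Ioo (0:ℝ) 1) :
    ∃ C > (0:ℝ), ∀ (η : ℝ), 0 < η → ∀ (ω g H F : ℝ → ℝ),
      (∀ t ≥ (0:ℝ), 0 ≤ ω t) →
      (∀ t ≥ (0:ℝ), 0 ≤ g t) →
      (∀ t ≥ (0:ℝ), 0 ≤ H t) →
      ContinuousOn F (Set.Ici 0) →
      (∀ t > (0:ℝ), DifferentiableAt ℝ F t) →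
      (∀ t ≥ (0:ℝ), C1 * H t - g t ≤ F t) →
      (∀ t ≥ (0:ℝ), F t ≤ C2 * H t + g t) →
      (∀ t > (0:ℝ), deriv F t + η * F t ≤ ω t * H t ^ θ + g t) →
      ∀ t ≥ (0:ℝ), ∀ M ≥ (0:ℝ), F 0 ≤ M →
        (∀ s ∈ Set.Icc (0:ℝ) t, (ω s / η) ^ (1/(1-θ)) + g s * (1 + 1/η) ≤ M) →
        F t ≤ C * M := by
  obtain ⟨hθ0, hθ1⟩ := hθ
  have h1θ : (0:ℝ) < 1 - θ := by linarith
  set p : ℝ := 1 / (1 - θ) with hp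
  set q : ℝ := 1 / θ with hq
  have hpq : p.HolderConjugate q := by
    rw [Real.holderConjugate_iff]
    constructor
    · rw [hp]; rw [lt_div_iff₀ h1θ]; linarith
    · rw [hp, hq]; simp only [one_div, inv_inv]; ring
  set δ : ℝ := C1 / (2 * θ) with hδdef
  have hδ : 0 < δ := div_pos hC1 (by linarith)
  set K1 : ℝ := (1 - θ) * δ ^ (-(θ * p)) with hK1def
  have hK1 : 0 < K1 := mul_pos h1θ (Real.rpow_pos_of_pos hδ _)
  set K : ℝ := max K1 1 with hKdef
  have hK1le : K1 ≤ K := le_max_left _ _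
  have hK1' : (1:ℝ) ≤ K := le_max_right _ _
  clear_value p q δ K1 K
  refine ⟨2 * K, by linarith, ?_⟩
  intro η hη ω g H F hω hg hH hFc hdF hlow hupp hode t ht M hM hF0 hMb
  -- key pointwise differential inequality
  have key : ∀ s ∈ Set.Ioo (0:ℝ) t,
      deriv F s + (η / 2) * F s ≤ (η / 2) * (2 * K * M) := by
    intro s hs
    have hs0 : (0:ℝ) ≤ s := hs.1.le
    have hωs : 0 ≤ ω s := hω s hs0
    have hgs : 0 ≤ g s := hg s hs0
    have hHs : 0 ≤ H s := hH s hs0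
    have hδη : 0 < δ * η := mul_pos hδ hη
    -- Young's inequality step
    set a : ℝ := ω s / (δ * η) ^ θ with ha
    set b : ℝ := (δ * η * H s) ^ θ with hb
    have hδηθ : (0:ℝ) < (δ * η) ^ θ := Real.rpow_pos_of_pos hδη _
    have hab : a * b = ω s * H s ^ θ := by
      rw [ha, hb, Real.mul_rpow hδη.le hHs]
      field_simp
    have hyoung : a * b ≤ a ^ p / p + b ^ q / q :=
      Real.young_inequality_of_nonneg (by positivity) (by positivity) hpq
    have hbq : b ^ q = δ * η * H s := by
      rw [hb, hq, ← Real.rpow_mul (by positivity), mul_one_div,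
        div_self (ne_of_gt hθ0), Real.rpow_one]
    have hpne : p ≠ 0 := hpq.ne_zero
    have hp1 : p * (1 - θ) = 1 := by rw [hp]; field_simp
    have hpsum : p = 1 + θ * p := by rw [hp]; field_simp; ring
    have hδθp : (0:ℝ) < δ ^ (θ * p) := Real.rpow_pos_of_pos hδ _
    have hηθp : (0:ℝ) < η ^ (θ * p) := Real.rpow_pos_of_pos hη _
    have hηp : η ^ p = η * η ^ (θ * p) := by
      conv_lhs => rw [hpsum]
      rw [Real.rpow_add hη, Real.rpow_one]
    have hapval : a ^ p = ω s ^ p / (δ ^ (θ * p) * η ^ (θ * p)) := by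
      rw [ha, Real.div_rpow hωs (Real.rpow_nonneg hδη.le _),
        ← Real.rpow_mul hδη.le, Real.mul_rpow hδ.le hη.le]
    have hap : a ^ p / p = K1 * η * (ω s / η) ^ p := by
      rw [hapval, hK1def, Real.rpow_neg hδ.le, Real.div_rpow hωs hη.le, hηp]
      rw [div_eq_iff hpne]
      field_simp
      linear_combination (-(ω s ^ p)) * hpsum
    have hbq2 : b ^ q / q = (C1 / 2) * η * H s := by
      rw [hbq, hq]
      field_simp [hδdef]
      rw [hδdef]; field_simp
    have hyoung2 : ω s * H s ^ θ ≤ K1 * η * (ω s / η) ^ p + (C1 / 2) * η * H s := by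
      rw [← hab, ← hap, ← hbq2]; exact hyoung
    -- lower bound on F
    have hlow' : C1 * H s ≤ F s + g s := by have := hlow s hs0; linarith
    have hode' := hode s hs.1
    have hMs := hMb s ⟨hs0, hs.2.le⟩
    have hrp : 0 ≤ (ω s / η) ^ p := Real.rpow_nonneg (by positivity) _
    -- combine
    have hKM : K1 * (ω s / η) ^ p + g s * (1/2 + 1/η) ≤ K * M := by
      have h1 : K1 * (ω s / η) ^ p ≤ K * (ω s / η) ^ p :=
        mul_le_mul_of_nonneg_right hK1le hrp
      have h2 : g s * (1/2 + 1/η) ≤ K * (g s * (1 + 1/η)) := by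
        have : g s * (1/2 + 1/η) ≤ 1 * (g s * (1 + 1/η)) := by
          rw [one_mul]
          apply mul_le_mul_of_nonneg_left _ hgs
          have : 0 < 1/η := by positivity
          linarith
        refine this.trans ?_
        apply mul_le_mul_of_nonneg_right hK1' (by positivity)
      have h3 : K * (ω s / η) ^ p + K * (g s * (1 + 1/η)) ≤ K * M := by
        rw [← mul_add]
        exact mul_le_mul_of_nonneg_left hMs (by linarith)
      linarith
    have hηKM : K1 * η * (ω s / η) ^ p + (η/2) * g s + g s ≤ η * (K * M) := by
      have h := mul_le_mul_of_nonneg_left hKM hη.le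
      have hgη : η * (K1 * (ω s / η) ^ p + g s * (1/2 + 1/η))
          = K1 * η * (ω s / η) ^ p + (η/2) * g s + g s := by
        field_simp; ring
      rw [hgη] at h
      exact h
    have hlow2 : (η/2) * (C1 * H s) ≤ (η/2) * (F s + g s) :=
      mul_le_mul_of_nonneg_left hlow' (by positivity)
    linarith [hyoung2, hode', hlow2, hηKM]
  -- the auxiliary function G
  set G : ℝ → ℝ := fun s => Real.exp (η / 2 * s) * (F s - 2 * K * M) with hG
  have hGanti : AntitoneOn G (Set.Icc 0 t) := by
    apply antitoneOn_of_deriv_nonpos (convex_Icc 0 t)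
    · apply ContinuousOn.mul
      · exact (Real.continuous_exp.comp (continuous_const.mul continuous_id)).continuousOn
      · exact ((hFc.mono Set.Icc_subset_Ici_self).sub continuousOn_const)
    · intro x hx
      rw [interior_Icc] at hx
      have hd : HasDerivAt G (Real.exp (η/2 * x) * (η/2) * (F x - 2*K*M)
          + Real.exp (η/2 * x) * deriv F x) x := by
        have h1 : HasDerivAt (fun s : ℝ => η/2 * s) (η/2) x := by
          simpa using (hasDerivAt_id x).const_mul (η/2)
        have h2 := h1.exp
        have h3 : HasDerivAt (fun s => F s - 2*K*M) (deriv F x) x :=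
          (hdF x hx.1).hasDerivAt.sub_const _
        exact h2.mul h3
      exact hd.differentiableAt.differentiableWithinAt
    · intro x hx
      rw [interior_Icc] at hx
      have hd : HasDerivAt G (Real.exp (η/2 * x) * (η/2) * (F x - 2*K*M)
          + Real.exp (η/2 * x) * deriv F x) x := by
        have h1 : HasDerivAt (fun s : ℝ => η/2 * s) (η/2) x := by
          simpa using (hasDerivAt_id x).const_mul (η/2)
        have h2 := h1.exp
        have h3 : HasDerivAt (fun s => F s - 2*K*M) (deriv F x) x :=
          (hdF x hx.1).hasDerivAt.sub_const _
        exact h2.mul h3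
      rw [hd.deriv]
      have hkey := key x hx
      have he : 0 < Real.exp (η/2 * x) := Real.exp_pos _
      have h2 := mul_le_mul_of_nonneg_left hkey he.le
      nlinarith [h2]
  have hGt : G t ≤ G 0 := hGanti ⟨le_refl 0, ht⟩ ⟨ht, le_refl t⟩ ht
  have hG0 : G 0 = F 0 - 2*K*M := by simp [hG]
  have het : 0 < Real.exp (η/2 * t) := Real.exp_pos _
  have hG0le : G 0 ≤ 0 := by
    rw [hG0]; nlinarith [hF0, hM, hK1']
  have hfin : Real.exp (η/2 * t) * (F t - 2*K*M) ≤ 0 := le_trans hGt hG0le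
  have h2 : F t - 2*K*M ≤ 0 := by nlinarith [het, hfin]
  linarith
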